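/- Let α ∈ (0,1), β > 0 and a₁, a₂ > 0, b₁, b₂ ≥ 0 with a₂b₁ = a₁b₂ (restriction (T1)) and a_i ≥ 2b_i·cosh(βπ/2)·√(1 + tan²(απ/2)·tanh²(βπ/2)) for i = 1,2 (restrictions (T3₁), (T3₂)). Then Re P(iω)·Re Q(iω) + Im P(iω)·Im Q(iω) ≥ 1 for every ω > 0 (in particular the storage modulus Re Ê(ω) is positive). -/

import Mathlib

/-- `φ_{a,b}(s) = 1 + a·s^α + b·(s^{α+iβ} + s^{α−iβ})`, with principal complex powers. -/
noncomputable def phi (α β a b : ℝ) (s : ℂ) : ℂ :=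
  1 + (a : ℂ) * s ^ (α : ℂ) +
    (b : ℂ) * (s ^ ((α : ℂ) + Complex.I * (β : ℂ)) + s ^ ((α : ℂ) - Complex.I * (β : ℂ)))

/-- The constant `cosh(βπ/2)·√(1 + tan²(απ/2)·tanh²(βπ/2))` appearing in restrictions (T3). -/
noncomputable def Ctan (α β : ℝ) : ℝ :=
  Real.cosh (β * (Real.pi / 2)) *
    Real.sqrt (1 + (Real.tan (α * (Real.pi / 2)) * Real.tanh (β * (Real.pi / 2))) ^ 2)

open Real in
theorem log_I_mul (ω : ℝ) (hω : 0 < ω) :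
    Complex.log (Complex.I * ω) = (Real.log ω : ℂ) + (π/2 : ℝ) * Complex.I := by
  rw [mul_comm, Complex.log]
  rw [Complex.arg_real_mul _ hω, Complex.arg_I]
  congr 2
  rw [norm_mul]
  simp [Complex.norm_real, abs_of_pos hω]

open Real in
theorem phi_re (α β a b ω : ℝ) (hω : 0 < ω) :
    (phi α β a b (Complex.I * ω)).re
      = 1 + Real.exp (α * Real.log ω) * (a * Real.cos (α*(π/2))
          + 2*b*(Real.cos (α*(π/2)) * Real.cos (β*Real.log ω) * Real.cosh (β*(π/2))
                 + Real.sin (α*(π/2)) * Real.sin (β*Real.log ω) * Real.sinh (β*(π/2)))) := by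
  have hs : Complex.I * (ω:ℂ) ≠ 0 := by simp [Complex.ext_iff, hω.ne']
  rw [phi]
  rw [Complex.cpow_def_of_ne_zero hs, Complex.cpow_def_of_ne_zero hs,
    Complex.cpow_def_of_ne_zero hs, log_I_mul ω hω]
  simp only [Complex.add_re, Complex.one_re, Complex.mul_re, Complex.mul_im,
    Complex.ofReal_re, Complex.ofReal_im, Complex.I_re, Complex.I_im,
    Complex.add_im, Complex.sub_re, Complex.sub_im, Complex.exp_re, Complex.exp_im]
  norm_num
  ring_nf
  simp only [Real.exp_add, Real.cos_add, Real.sin_add, Real.cos_neg, Real.sin_neg,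
    Real.cosh_eq, Real.sinh_eq]
  ring_nf

open Real in
theorem phi_im (α β a b ω : ℝ) (hω : 0 < ω) :
    (phi α β a b (Complex.I * ω)).im
      = Real.exp (α * Real.log ω) * (a * Real.sin (α*(π/2))
          + 2*b*(Real.sin (α*(π/2)) * Real.cos (β*Real.log ω) * Real.cosh (β*(π/2))
                 - Real.cos (α*(π/2)) * Real.sin (β*Real.log ω) * Real.sinh (β*(π/2)))) := by
  have hs : Complex.I * (ω:ℂ) ≠ 0 := by simp [Complex.ext_iff, hω.ne']
  rw [phi]
  rw [Complex.cpow_def_of_ne_zero hs, Complex.cpow_def_of_ne_zero hs,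
    Complex.cpow_def_of_ne_zero hs, log_I_mul ω hω]
  simp only [Complex.add_re, Complex.one_re, Complex.mul_re, Complex.mul_im,
    Complex.ofReal_re, Complex.ofReal_im, Complex.I_re, Complex.I_im,
    Complex.add_im, Complex.one_im, Complex.sub_re, Complex.sub_im,
    Complex.exp_re, Complex.exp_im]
  norm_num
  ring_nf
  simp only [Real.exp_add, Real.cos_add, Real.sin_add, Real.cos_neg, Real.sin_neg,
    Real.cosh_eq, Real.sinh_eq]
  ring_nf


set_option maxHeartbeats 1000000 in
theorem main_ineq (a₁ a₂ b₁ b₂ cA sA cB sB ch sh x r C : ℝ)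
    (hb₁ : 0 ≤ b₁) (hb₂ : 0 ≤ b₂)
    (hcA : 0 < cA) (hsA : 0 ≤ sA) (hA : sA^2+cA^2=1) (hB : sB^2+cB^2=1)
    (hch : 1 ≤ ch) (hsh : 0 ≤ sh) (hch2 : ch^2 = 1 + sh^2)
    (hx : 0 < x)
    (hr0 : 0 ≤ r) (hr2 : r^2 = cA^2*ch^2 + sA^2*sh^2)
    (hCr : cA * C = r) (hCc : ch ≤ C)
    (hT3₁ : a₁ ≥ 2*b₁*C) (hT3₂ : a₂ ≥ 2*b₂*C)
    (hcB1 : -1 ≤ cB) (hcB2 : cB ≤ 1) :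
    1 ≤ (1 + x*(a₂*cA + 2*b₂*(cA*cB*ch + sA*sB*sh)))
          * (1 + x*(a₁*cA + 2*b₁*(cA*cB*ch + sA*sB*sh)))
        + x*(a₂*sA + 2*b₂*(sA*cB*ch - cA*sB*sh))
          * (x*(a₁*sA + 2*b₁*(sA*cB*ch - cA*sB*sh))) := by
  have h1r : 2*b₁*r ≤ a₁*cA := by
    rw [← hCr]
    nlinarith [mul_le_mul_of_nonneg_right hT3₁ hcA.le]
  have h2r : 2*b₂*r ≤ a₂*cA := by
    rw [← hCr]
    nlinarith [mul_le_mul_of_nonneg_right hT3₂ hcA.le]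
  have ht1 : 0 ≤ a₁ - 2*b₁*ch := by nlinarith [mul_le_mul_of_nonneg_left hCc hb₁]
  have ht2 : 0 ≤ a₂ - 2*b₂*ch := by nlinarith [mul_le_mul_of_nonneg_left hCc hb₂]
  set u := cA*cB*ch + sA*sB*sh with hudef
  set v := sA*cB*ch - cA*sB*sh with hvdef
  have hcs : 0 ≤ r + u := by
    nlinarith [sq_nonneg (cA*sB*ch - sA*cB*sh), hr0, hr2, hB, sq_nonneg (r + u),
      sq_nonneg (r - u)]
  have hR1 : 0 ≤ a₁*cA + 2*b₁*u := by nlinarith [mul_nonneg hb₁ hcs]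
  have hR2 : 0 ≤ a₂*cA + 2*b₂*u := by nlinarith [mul_nonneg hb₂ hcs]
  have hcB1' : (0:ℝ) ≤ 1 + cB := by linarith
  have hE : 0 ≤ (a₂*cA + 2*b₂*u)*(a₁*cA + 2*b₁*u) + (a₂*sA + 2*b₂*v)*(a₁*sA + 2*b₁*v) := by
    have hkey : (a₂*cA + 2*b₂*u)*(a₁*cA + 2*b₁*u) + (a₂*sA + 2*b₂*v)*(a₁*sA + 2*b₁*v)
        = (a₁-2*b₁*ch)*(a₂-2*b₂*ch)
          + 2*ch*((a₁-2*b₁*ch)*b₂ + (a₂-2*b₂*ch)*b₁)*(1+cB)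
          + 4*b₁*b₂*((1+cB)^2 + 2*sh^2*(1+cB)) := by
      rw [hudef, hvdef]
      linear_combination (a₁*a₂ + 2*(a₁*b₂+a₂*b₁)*cB*ch + 4*b₁*b₂*(cB^2*ch^2 + sB^2*sh^2)) * hA
        + 4*b₁*b₂*(1+cB)^2 * hch2 + 4*b₁*b₂*sh^2 * hB
    rw [hkey]
    have n1 : 0 ≤ (a₁-2*b₁*ch)*(a₂-2*b₂*ch) := mul_nonneg ht1 ht2
    have n2 : 0 ≤ 2*ch*((a₁-2*b₁*ch)*b₂ + (a₂-2*b₂*ch)*b₁)*(1+cB) :=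
      mul_nonneg (mul_nonneg (by positivity)
        (add_nonneg (mul_nonneg ht1 hb₂) (mul_nonneg ht2 hb₁))) hcB1'
    have n3 : 0 ≤ 4*b₁*b₂*((1+cB)^2 + 2*sh^2*(1+cB)) := by
      apply mul_nonneg (by positivity)
      exact add_nonneg (sq_nonneg _) (mul_nonneg (by positivity) hcB1')
    linarith
  have hfin : (1 + x*(a₂*cA + 2*b₂*u))*(1 + x*(a₁*cA + 2*b₁*u))
      + x*(a₂*sA + 2*b₂*v)*(x*(a₁*sA + 2*b₁*v))
      = 1 + x*((a₁*cA + 2*b₁*u)+(a₂*cA + 2*b₂*u))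
        + x^2*((a₂*cA + 2*b₂*u)*(a₁*cA + 2*b₁*u) + (a₂*sA + 2*b₂*v)*(a₁*sA + 2*b₁*v)) := by
    ring
  have n4 : 0 ≤ x*((a₁*cA + 2*b₁*u)+(a₂*cA + 2*b₂*u)) := mul_nonneg hx.le (add_nonneg hR1 hR2)
  have n5 : 0 ≤ x^2*((a₂*cA + 2*b₂*u)*(a₁*cA + 2*b₁*u) + (a₂*sA + 2*b₂*v)*(a₁*sA + 2*b₁*v)) :=
    mul_nonneg (sq_nonneg x) hE
  linarith [hfin]

/-- Under `a₁, a₂ > 0`, `b₁, b₂ ≥ 0`set_option maxHeartbeats 1000000 in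
, (T1) `a₂b₁ = a₁b₂` and (T3₁), (T3₂), the storage
modulus is positive: `Re P(iω)·Re Q(iω) + Im P(iω)·Im Q(iω) ≥ 1` for every `ω > 0`. -/
theorem stmt_7 (α β a₁ a₂ b₁ b₂ : ℝ) (hα : α ∈ Set.Ioo (0:ℝ) 1) (hβ : 0 < β)
    (ha₁ : 0 < a₁) (ha₂ : 0 < a₂) (hb₁ : 0 ≤ b₁) (hb₂ : 0 ≤ b₂)
    (hT1 : a₂ * b₁ = a₁ * b₂)
    (hT3₁ : a₁ ≥ 2 * b₁ * Ctan α β) (hT3₂ : a₂ ≥ 2 * b₂ * Ctan α β) :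
    ∀ ω : ℝ, 0 < ω →
      1 ≤ (phi α β a₂ b₂ (Complex.I * (ω : ℂ))).re * (phi α β a₁ b₁ (Complex.I * (ω : ℂ))).re +
        (phi α β a₂ b₂ (Complex.I * (ω : ℂ))).im * (phi α β a₁ b₁ (Complex.I * (ω : ℂ))).im := by
  intro ω hω
  obtain ⟨hα0, hα1⟩ := hα
  have hπ := Real.pi_pos
  rw [phi_re α β a₂ b₂ ω hω, phi_re α β a₁ b₁ ω hω, phi_im α β a₂ b₂ ω hω,
    phi_im α β a₁ b₁ ω hω]
  have hcA : 0 < Real.cos (α*(Real.pi/2)) :=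
    Real.cos_pos_of_mem_Ioo ⟨by nlinarith, by nlinarith⟩
  have hsA : 0 ≤ Real.sin (α*(Real.pi/2)) :=
    Real.sin_nonneg_of_nonneg_of_le_pi (by positivity) (by nlinarith)
  have hch0 : (0:ℝ) < Real.cosh (β*(Real.pi/2)) := Real.cosh_pos _
  have hr0 : 0 ≤ Real.sqrt (Real.cos (α*(Real.pi/2))^2 * Real.cosh (β*(Real.pi/2))^2
      + Real.sin (α*(Real.pi/2))^2 * Real.sinh (β*(Real.pi/2))^2) := Real.sqrt_nonneg _
  have hCr : Real.cos (α*(Real.pi/2)) * Ctan α β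
      = Real.sqrt (Real.cos (α*(Real.pi/2))^2 * Real.cosh (β*(Real.pi/2))^2
          + Real.sin (α*(Real.pi/2))^2 * Real.sinh (β*(Real.pi/2))^2) := by
    rw [Ctan, Real.tan_eq_sin_div_cos, Real.tanh_eq_sinh_div_cosh]
    rw [show Real.cos (α*(Real.pi/2)) * (Real.cosh (β*(Real.pi/2)) *
          Real.sqrt (1 + (Real.sin (α*(Real.pi/2))/Real.cos (α*(Real.pi/2))
            * (Real.sinh (β*(Real.pi/2))/Real.cosh (β*(Real.pi/2))))^2))
        = Real.sqrt ((Real.cos (α*(Real.pi/2)) * Real.cosh (β*(Real.pi/2)))^2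
            * (1 + (Real.sin (α*(Real.pi/2))/Real.cos (α*(Real.pi/2))
                * (Real.sinh (β*(Real.pi/2))/Real.cosh (β*(Real.pi/2))))^2)) by
      rw [Real.sqrt_mul (by positivity), Real.sqrt_sq (by positivity)]; ring]
    congr 1
    have hne : (Real.cos (α*(Real.pi/2)) * Real.cosh (β*(Real.pi/2)))^2 ≠ 0 := by positivity
    rw [div_mul_div_comm, div_pow, mul_add, mul_one, mul_div_cancel₀ _ hne]
    ring
  have hCc : Real.cosh (β*(Real.pi/2)) ≤ Ctan α β := by
    have h1 : (1:ℝ) ≤ Real.sqrt (1 + (Real.tan (α*(Real.pi/2)) * Real.tanh (β*(Real.pi/2)))^2) := by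
      have h2 := Real.sqrt_le_sqrt (show (1:ℝ) ≤ 1 + (Real.tan (α*(Real.pi/2)) * Real.tanh (β*(Real.pi/2)))^2 by
        nlinarith [sq_nonneg (Real.tan (α*(Real.pi/2)) * Real.tanh (β*(Real.pi/2)))])
      rwa [Real.sqrt_one] at h2
    rw [Ctan]
    exact le_mul_of_one_le_right hch0.le h1
  exact main_ineq a₁ a₂ b₁ b₂ _ _ _ _ _ _ _ _ _ hb₁ hb₂ hcA hsA
    (Real.sin_sq_add_cos_sq _) (Real.sin_sq_add_cos_sq _)
    (Real.one_le_cosh _) (Real.sinh_nonneg_iff.2 (by positivity)) (Real.cosh_sq' _)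
    (Real.exp_pos _) hr0 (Real.sq_sqrt (by positivity)) hCr hCc hT3₁ hT3₂
    (Real.neg_one_le_cos _) (Real.cos_le_one _)
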